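/- Let G be an m-free digraph, m ≥ 4, and suppose that for every vertex u in some directed cycle of G, u has both an out-neighbor and an in-neighbor. For v ∈ V(G) and 1 ≤ k ≤ m−3, set V₂ = V(G) ∖ ⋃_{i=1}^{k+1} N⁻_i(v). Then every arc from V₂ to ⋃_{i=1}^{k+1} N⁻_i(v) has tail in N⁻_{k+2}(v) and head in N⁻_{k+1}(v). -/

import Mathlib

/-- A simple digraph: no loops, no parallel arcs (antiparallel arcs allowed). -/
structure SimpleDigraph (V : Type*) where
  Adj : V → V → Prop
  irrefl : ∀ v, ¬ Adj v v

namespace SimpleDigraph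

variable {V : Type*}

/-- There is a directed walk from `u` to `w` with exactly `k` arcs. -/
def HasWalk (G : SimpleDigraph V) (u w : V) (k : ℕ) : Prop :=
  ∃ p : ℕ → V, p 0 = u ∧ p k = w ∧ ∀ i < k, G.Adj (p i) (p (i + 1))

/-- The directed distance from `u` to `w` equals `k`. -/
def DistEq (G : SimpleDigraph V) (u w : V) (k : ℕ) : Prop :=
  G.HasWalk u w k ∧ ∀ j, G.HasWalk u w j → k ≤ j

/-- Vertices at directed distance exactly `i` from `v`. -/
def Nplus (G : SimpleDigraph V) (i : ℕ) (v : V) : Set V := {u | G.DistEq v u i}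

/-- Vertices whose directed distance to `v` is exactly `i`. -/
def Nminus (G : SimpleDigraph V) (i : ℕ) (v : V) : Set V := {u | G.DistEq u v i}

def arcSet (G : SimpleDigraph V) : Set (V × V) := {e | G.Adj e.1 e.2}

/-- The set of arcs from `A` to `B`. -/
def arcsBetween (G : SimpleDigraph V) (A B : Set V) : Set (V × V) :=
  {e | e.1 ∈ A ∧ e.2 ∈ B ∧ G.Adj e.1 e.2}

/-- `u` and `w` are nonadjacent: no arc in either direction. -/
def Nonadj (G : SimpleDigraph V) (u w : V) : Prop := ¬ G.Adj u w ∧ ¬ G.Adj w u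

/-- Missing (nonadjacent) unordered pairs with one endpoint in `A`, the other in `B`. -/
def missingPairs (G : SimpleDigraph V) (A B : Set V) : Set (Sym2 V) :=
  {p | ∃ a ∈ A, ∃ b ∈ B, p = s(a, b) ∧ a ≠ b ∧ G.Nonadj a b}

/-- A directed cycle, given as its list of (distinct) vertices. -/
def IsCycle (G : SimpleDigraph V) (l : List V) : Prop :=
  l ≠ [] ∧ l.Nodup ∧ l.Chain' G.Adj ∧
    ∃ a b, l.getLast? = some a ∧ l.head? = some b ∧ G.Adj a b

def Acyclic (G : SimpleDigraph V) : Prop := ∀ l : List V, ¬ G.IsCycle l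

/-- `G` is `m`-free: no directed cycle of length at most `m`. -/
def MFree (G : SimpleDigraph V) (m : ℕ) : Prop :=
  ∀ l : List V, G.IsCycle l → m < l.length

def deleteArcs (G : SimpleDigraph V) (X : Set (V × V)) : SimpleDigraph V :=
  ⟨fun a b => G.Adj a b ∧ (a, b) ∉ X, fun v h => G.irrefl v h.1⟩

/-- The induced subdigraph on a vertex set `A`. -/
def induce (G : SimpleDigraph V) (A : Set V) : SimpleDigraph A :=
  ⟨fun a b => G.Adj a b, fun a h => G.irrefl a h⟩

/-- Minimum size of a feedback arc set. -/
noncomputable def beta (G : SimpleDigraph V) : ℕ :=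
  sInf {n | ∃ X : Set (V × V), X ⊆ G.arcSet ∧ X.ncard = n ∧ (G.deleteArcs X).Acyclic}

/-- Number of unordered pairs of distinct nonadjacent vertices. -/
noncomputable def gamma (G : SimpleDigraph V) : ℕ :=
  {p : Sym2 V | ¬ p.IsDiag ∧ ∀ u w, p = s(u, w) → G.Nonadj u w}.ncard

/-- `l` is a shortest (hence induced) directed path of length `k`:
it has `k+1` distinct vertices, consecutive arcs, and the directed distance
between its endpoints equals `k`. -/
def IsShortestPath (G : SimpleDigraph V) (l : List V) (k : ℕ) : Prop :=
  l.length = k + 1 ∧ l.Nodup ∧ l.Chain' G.Adj ∧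
    ∃ a b, l.head? = some a ∧ l.getLast? = some b ∧ G.DistEq a b k

end SimpleDigraph

namespace SimpleDigraph
variable {V : Type*}
lemma hasWalk_cons {G : SimpleDigraph V} {a b v : V} {j : ℕ}
    (hab : G.Adj a b) (h : G.HasWalk b v j) : G.HasWalk a v (j+1) := by
  obtain ⟨p, h0, hj, hadj⟩ := h
  refine ⟨fun n => if n = 0 then a else p (n-1), by simp, ?_, ?_⟩
  · simp [hj]
  · intro i hi
    rcases Nat.eq_zero_or_pos i with rfl | hpos
    · simpa [h0] using hab
    · have h1 : i - 1 < j := by omega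
      have e1 : i ≠ 0 := by omega
      have e2 : i + 1 ≠ 0 := by omega
      have e3 : i + 1 - 1 = i - 1 + 1 := by omega
      simpa [e1, e2, e3] using hadj _ h1

lemma hasWalk_shortcut {G : SimpleDigraph V} {b v : V} {j : ℕ} {p : ℕ → V}
    (h0 : p 0 = b) (hj : p j = v) (hadj : ∀ i < j, G.Adj (p i) (p (i+1)))
    {i i' : ℕ} (hii : i < i') (hi' : i' ≤ j) (heq : p i = p i') :
    G.HasWalk b v (j - (i' - i)) := by
  refine ⟨fun n => if n ≤ i then p n else p (n + (i' - i)), by simp [h0], ?_, ?_⟩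
  · by_cases h : j - (i'-i) ≤ i
    · have hji : j = i' := by omega
      have : i = j - (i'-i) := by omega
      simp only [if_pos h, ← this, heq, hji ▸ hj]
      simp
    · have e : j - (i'-i) + (i'-i) = j := by omega
      simp [h, e, hj]
  · intro n hn
    by_cases h2 : n + 1 ≤ i
    · have : n ≤ i := by omega
      simp only [if_pos h2, if_pos this]
      exact hadj n (by omega)
    · by_cases h1 : n ≤ i
      · have hni : n = i := by omega
        subst hni
        have e : n + 1 + (i' - n) = i' + 1 := by omega
        simp only [if_pos h1, if_neg h2, e, heq]
        exact hadj i' (by omega)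
      · have e : n + 1 + (i' - i) = n + (i' - i) + 1 := by omega
        simp only [if_neg h1, if_neg h2, e]
        exact hadj _ (by omega)

end SimpleDigraph

theorem stmt17 {V : Type*} (G : SimpleDigraph V) (m k : ℕ)
    (hm : 4 ≤ m) (hG : G.MFree m)
    (hcyc : ∀ u : V, (∃ l : List V, G.IsCycle l ∧ u ∈ l) →
      (∃ w, G.Adj u w) ∧ (∃ w, G.Adj w u))
    (v : V) (hk1 : 1 ≤ k) (hk2 : k ≤ m - 3) :
    ∀ a b : V, a ∈ (⋃ i ∈ Set.Icc 1 (k + 1), G.Nminus i v)ᶜ →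
      b ∈ ⋃ i ∈ Set.Icc 1 (k + 1), G.Nminus i v → G.Adj a b →
      a ∈ G.Nminus (k + 2) v ∧ b ∈ G.Nminus (k + 1) v := by
  classical
  intro a b ha hb hab
  simp only [Set.mem_compl_iff, Set.mem_iUnion, Set.mem_Icc, not_exists] at ha hb
  obtain ⟨j, ⟨hj1, hj2⟩, hbd⟩ := hb
  have hbd' : G.DistEq b v j := hbd
  obtain ⟨⟨p, hp0, hpj, hpadj⟩, hjmin⟩ := hbd'
  -- injectivity of p on [0, j]
  have pinj : ∀ n n', n < n' → n' ≤ j → p n ≠ p n' := by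
    intro n n' hnn' hn'j heq
    have := hjmin _ (SimpleDigraph.hasWalk_shortcut hp0 hpj hpadj hnn' hn'j heq)
    omega
  -- a ≠ v, else we get a short cycle
  have hav : a ≠ v := by
    rintro rfl
    set l : List V := (List.range (j+1)).map p with hl
    have hlen : l.length = j + 1 := by simp [hl]
    have hget : ∀ i (hi : i < l.length), l.get ⟨i, hi⟩ = p i := by
      intro i hi
      simp [hl]
    have hcyc : G.IsCycle l := by
      refine ⟨by simp [hl], ?_, ?_, p j, p 0, ?_, ?_, ?_⟩
      · refine List.Nodup.map_on ?_ List.nodup_range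
        intro x hx y hy hxy
        simp only [List.mem_range] at hx hy
        by_contra hne
        rcases Nat.lt_or_ge x y with h | h
        · exact pinj x y h (by omega) hxy
        · exact pinj y x (by omega) (by omega) hxy.symm
      · rw [show List.Chain' G.Adj l ↔ List.IsChain G.Adj l from Iff.rfl, List.isChain_iff_getElem]
        intro i hi
        have h1 := hget i (by omega)
        have h2 := hget (i+1) hi
        simp only [List.get_eq_getElem] at h1 h2
        rw [h1, h2]
        exact hpadj i (by omega)
      · rw [hl, List.range_succ, List.map_append]
        simp
      · rw [hl, List.range_succ_eq_map]
        simp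
      · rw [hpj, hp0]; exact hab
    have := hG l hcyc
    omega
  -- distance from a to v
  have haw : G.HasWalk a v (j+1) := SimpleDigraph.hasWalk_cons hab ⟨p, hp0, hpj, hpadj⟩
  have hex : ∃ n, G.HasWalk a v n := ⟨j+1, haw⟩
  set d := Nat.find hex with hd
  have hdw : G.HasWalk a v d := Nat.find_spec hex
  have hdle : d ≤ j + 1 := Nat.find_le haw
  have hdpos : d ≠ 0 := by
    intro h0
    obtain ⟨q, hq0, hqd, _⟩ := hdw
    exact hav (hq0 ▸ h0 ▸ hqd)
  have hdist : G.DistEq a v d := ⟨hdw, fun n hn => Nat.find_le hn⟩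
  have hnot : ¬ (1 ≤ d ∧ d ≤ k + 1) := by
    intro ⟨h1, h2⟩
    exact ha d ⟨h1, h2⟩ hdist
  have hdk : d = k + 2 := by omega
  have hjk : j = k + 1 := by omega
  exact ⟨hdk ▸ hdist, hjk ▸ hbd⟩
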